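/- Let 0 < a₁ < 1 and a₂ > 0 with a₁a₂ ≥ 1, and let d₁ > 0 with a₂ + d₁ > 1. Then d₂ᶜ ≤ a₂ + d₁ − 1, where d₂ᶜ := 4·(1 − √(1 − a₁) + (1/(1 − √(1 − a₁)))·(a₁a₂/(a₂ + d₁)))⁻² − 1. -/

import Mathlib

theorem stmt_13 (a₁ a₂ d₁ : ℝ) (ha₁ : 0 < a₁) (ha₁' : a₁ < 1)
    (ha₂ : 0 < a₂) (h : 1 ≤ a₁ * a₂) (hd₁ : 0 < d₁) (h' : 1 < a₂ + d₁) :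
    4 * (1 - Real.sqrt (1 - a₁)
          + (1 / (1 - Real.sqrt (1 - a₁))) * (a₁ * a₂ / (a₂ + d₁)))⁻¹ ^ 2 - 1
      ≤ a₂ + d₁ - 1 := by
  set s := Real.sqrt (1 - a₁) with hs
  have hs0 : 0 ≤ s := Real.sqrt_nonneg _
  have hs2 : s ^ 2 = 1 - a₁ := Real.sq_sqrt (by linarith)
  have hs1 : s < 1 := by nlinarith
  have hS : 0 < a₂ + d₁ := by linarith
  have key : (1 / (1 - s)) * (a₁ * a₂ / (a₂ + d₁)) = (1 + s) * (a₂ / (a₂ + d₁)) := by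
    have ha : a₁ = (1 - s) * (1 + s) := by nlinarith
    have h1 : (1 : ℝ) - s ≠ 0 := by linarith
    have h2 : a₂ + d₁ ≠ 0 := by linarith
    rw [ha]
    field_simp
  rw [key]
  set t := a₂ / (a₂ + d₁) with ht
  have ht0 : 0 < t := div_pos ha₂ hS
  have hE : 0 < 1 - s + (1 + s) * t := by nlinarith
  have hsq : (1 - s + (1 + s) * t) ^ 2 ≥ 4 * (1 - s) * ((1 + s) * t) := by
    nlinarith [sq_nonneg (1 - s - (1 + s) * t)]
  have hSt : (a₂ + d₁) * t = a₂ := by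
    rw [ht]; field_simp
  have h4 : 4 ≤ (a₂ + d₁) * (1 - s + (1 + s) * t) ^ 2 := by
    nlinarith [mul_le_mul_of_nonneg_left hsq hS.le]
  have hfin : 4 * (1 - s + (1 + s) * t)⁻¹ ^ 2 ≤ a₂ + d₁ := by
    rw [← one_div, div_pow, one_pow, mul_one_div, div_le_iff₀ (by positivity)]
    linarith
  linarith
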